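/- Let $r, e \ge 1$ and let $p, p'$ be integers with $0 \le 2p \le re$, $p' \ge p$, $p' - p \le e$, and $p' + p \le re$. Then the constant $\mathcal{N}^{II}_{r,e,p',p} = \frac{(-1)^{p'-p}(2p)!\,(2p')!\,(re-2p)!\,e!}{(p'-p)!\,(e-p'+p)!\,(re-p'-p)!\,((r+1)e-2p')!} \cdot \mathcal{J}_{s,p}$, where $s = (r+1)e - p' - p$ and $\mathcal{J}_{s,p} = \sum_{\beta=0}^{p}\frac{(-1)^\beta 2^{2p-2\beta}(s+2p-\beta)!}{(2p-2\beta)!\beta!}$, is nonzero. -/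

import Mathlib

open Finset Nat


lemma B_eq (n : ℕ) : (∑ k ∈ range (n+1), ((-1:ℚ)^k * 2^(n-2*k) * ((n-k).choose k : ℚ))) = n + 1 := by
  induction n using Nat.twoStepInduction with
  | zero => simp
  | one =>
    rw [Finset.sum_range_succ, Finset.sum_range_one]
    norm_num
  | more n ih2 ih1 =>
    have doub : ∀ k : ℕ, ((2:ℚ)^(n+2-2*k) * ((n+1-k).choose k : ℚ))
        = 2 * 2^(n+1-2*k) * ((n+1-k).choose k : ℚ) := by
      intro k
      rcases le_or_gt (2*k) (n+1) with h | h
      · have : n + 2 - 2*k = (n+1-2*k) + 1 := by omega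
        rw [this, pow_succ]; ring
      · have : (n+1-k).choose k = 0 := Nat.choose_eq_zero_of_lt (by omega)
        rw [this]; push_cast; ring
    rw [Finset.sum_range_succ']
    have pascal : ∀ j ∈ range (n+2),
        ((-1:ℚ)^(j+1) * 2^(n+2-2*(j+1)) * ((n+2-(j+1)).choose (j+1) : ℚ))
        = (-((-1:ℚ)^j * 2^(n-2*j) * ((n-j).choose j : ℚ)))
          + ((-1:ℚ)^(j+1) * 2^(n+2-2*(j+1)) * ((n+1-(j+1)).choose (j+1) : ℚ)) := by
      intro j hj
      have hj' := mem_range.mp hj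
      rcases Nat.lt_or_ge j (n+1) with hjn | hjn
      · have h1 : n + 2 - (j+1) = (n - j) + 1 := by omega
        have h2 : n + 1 - (j+1) = n - j := by omega
        have h3 : n + 2 - 2*(j+1) = n - 2*j := by omega
        rw [h1, h2, h3, Nat.choose_succ_succ (n-j) j]
        push_cast
        rw [pow_succ]
        ring
      · have hj1 : j = n + 1 := by omega
        subst hj1
        have c1 : (n+2-(n+1+1)).choose (n+1+1) = 0 := Nat.choose_eq_zero_of_lt (by omega)
        have c2 : (n-(n+1)).choose (n+1) = 0 := Nat.choose_eq_zero_of_lt (by omega)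
        have c3 : (n+1-(n+1+1)).choose (n+1+1) = 0 := Nat.choose_eq_zero_of_lt (by omega)
        rw [c1, c2, c3]; push_cast; ring
    rw [Finset.sum_congr rfl pascal, Finset.sum_add_distrib]
    have e2 : ∑ j ∈ range (n+2), (-((-1:ℚ)^j * 2^(n-2*j) * ((n-j).choose j : ℚ))) = -(↑n+1) := by
      rw [Finset.sum_neg_distrib, neg_inj, Finset.sum_range_succ, ih2]
      have : (n-(n+1)).choose (n+1) = 0 := Nat.choose_eq_zero_of_lt (by omega)
      rw [this]; push_cast; ring
    have ih1' : ∑ k ∈ range (n+2), ((-1:ℚ)^k * 2^(n+1-2*k) * ((n+1-k).choose k : ℚ)) = (↑n+1) + 1 := by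
      rw [show (n:ℕ)+2 = n+1+1 from rfl, ih1]; push_cast; ring
    have conv1 : ∑ k ∈ range (n+2), ((-1:ℚ)^k * 2^(n+2-2*k) * ((n+1-k).choose k : ℚ))
        = 2 * ((↑n+1) + 1) := by
      rw [← ih1', Finset.mul_sum]
      apply Finset.sum_congr rfl
      intro k _
      rw [show 2 * ((-1:ℚ)^k * 2^(n+1-2*k) * ((n+1-k).choose k:ℚ))
          = (-1:ℚ)^k * (2 * 2^(n+1-2*k) * ((n+1-k).choose k:ℚ)) by ring, ← doub k]
      ring
    rw [Finset.sum_range_succ'] at conv1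
    have hlast : ∑ j ∈ range (n+2), ((-1:ℚ)^(j+1) * 2^(n+2-2*(j+1)) * ((n+1-(j+1)).choose (j+1) : ℚ))
        = ∑ j ∈ range (n+1), ((-1:ℚ)^(j+1) * 2^(n+2-2*(j+1)) * ((n+1-(j+1)).choose (j+1) : ℚ)) := by
      rw [Finset.sum_range_succ]
      have : (n+1-(n+1+1)).choose (n+1+1) = 0 := Nat.choose_eq_zero_of_lt (by omega)
      rw [this]; push_cast; ring
    rw [e2, hlast]
    have hf0 : ((-1:ℚ)^0 * 2^(n+2-2*0) * ((n+2-0).choose 0 : ℚ))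
        = ((-1:ℚ)^0 * 2^(n+2-2*0) * ((n+1-0).choose 0 : ℚ)) := by simp
    rw [hf0]
    push_cast at conv1 ⊢
    linarith [conv1]

lemma A0 (p : ℕ) : ∑ β ∈ range (p+1),
    ((-1:ℚ)^β * 2^(2*p-2*β) * ((2*p-β)! : ℚ) / (((2*p-2*β)! : ℚ) * ((β)! : ℚ)))
    = 2*p+1 := by
  have key : ∑ β ∈ range (p+1), ((-1:ℚ)^β * 2^(2*p-2*β) * ((2*p-β).choose β : ℚ)) = 2*p+1 := by
    have := B_eq (2*p)
    rw [← Finset.sum_subset (Finset.range_subset_range.mpr (by omega : p+1 ≤ 2*p+1))] at this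
    · push_cast at this ⊢; linarith [this]
    · intro k _ hk
      have : (2*p-k).choose k = 0 := Nat.choose_eq_zero_of_lt (by simp at hk; omega)
      rw [this]; push_cast; ring
  rw [← key]
  apply Finset.sum_congr rfl
  intro β hβ
  have hβ' : β ≤ p := Nat.lt_succ_iff.mp (mem_range.mp hβ)
  have hle : β ≤ 2*p - β := by omega
  have hfac := Nat.choose_mul_factorial_mul_factorial hle
  have h2 : 2*p - β - β = 2*p - 2*β := by omega
  rw [h2] at hfac
  rw [← hfac]
  have hβ0 : ((β)! : ℚ) ≠ 0 := by positivity
  have h2p0 : (((2*p-2*β))! : ℚ) ≠ 0 := by positivity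
  push_cast
  field_simp

noncomputable def A (s p : ℕ) : ℚ :=
  ∑ β ∈ range (p+1),
    ((-1:ℚ)^β * 2^(2*p-2*β) * ((s+2*p-β)! : ℚ) / (((2*p-2*β)! : ℚ) * ((β)! : ℚ)))

lemma keyRec (s p : ℕ) :
    A (s+1) (p+1) = ((s:ℚ)+2*p+3) * A s (p+1) + A (s+1) p := by
  have step1 : A (s+1) (p+1) = ∑ β ∈ range (p+2),
      (((s:ℚ)+2*p+3 - β) *
        ((-1:ℚ)^β * 2^(2*(p+1)-2*β) * ((s+2*(p+1)-β)! : ℚ)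
          / (((2*(p+1)-2*β)! : ℚ) * ((β)! : ℚ)))) := by
    unfold A
    apply Finset.sum_congr rfl
    intro β hβ
    have hβ' : β ≤ p + 1 := Nat.lt_succ_iff.mp (mem_range.mp hβ)
    have h1 : s+1+2*(p+1)-β = (s+2*(p+1)-β) + 1 := by omega
    rw [h1, Nat.factorial_succ]
    have h2 : ((s+2*(p+1)-β : ℕ) : ℚ) = (s:ℚ)+2*p+2 - β := by
      rw [Nat.cast_sub (by omega)]; push_cast; ring
    push_cast
    rw [h2]
    ring
  rw [step1]
  have split : ∀ β : ℕ, (((s:ℚ)+2*p+3 - β) *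
        ((-1:ℚ)^β * 2^(2*(p+1)-2*β) * ((s+2*(p+1)-β)! : ℚ)
          / (((2*(p+1)-2*β)! : ℚ) * ((β)! : ℚ))))
      = ((s:ℚ)+2*p+3) * ((-1:ℚ)^β * 2^(2*(p+1)-2*β) * ((s+2*(p+1)-β)! : ℚ)
          / (((2*(p+1)-2*β)! : ℚ) * ((β)! : ℚ)))
        - (β:ℚ) * ((-1:ℚ)^β * 2^(2*(p+1)-2*β) * ((s+2*(p+1)-β)! : ℚ)
          / (((2*(p+1)-2*β)! : ℚ) * ((β)! : ℚ))) := by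
    intro β; ring
  rw [Finset.sum_congr rfl (fun β _ => split β), Finset.sum_sub_distrib, ← Finset.mul_sum]
  have e3 : ∑ β ∈ range (p+2), ((β:ℚ) * ((-1:ℚ)^β * 2^(2*(p+1)-2*β) * ((s+2*(p+1)-β)! : ℚ)
          / (((2*(p+1)-2*β)! : ℚ) * ((β)! : ℚ)))) = - A (s+1) p := by
    rw [Finset.sum_range_succ']
    unfold A
    have hterm : ∀ γ ∈ range (p+1),
        (((γ+1 : ℕ):ℚ) * ((-1:ℚ)^(γ+1) * 2^(2*(p+1)-2*(γ+1)) * ((s+2*(p+1)-(γ+1))! : ℚ)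
          / (((2*(p+1)-2*(γ+1))! : ℚ) * (((γ+1))! : ℚ))))
        = -((-1:ℚ)^γ * 2^(2*p-2*γ) * ((s+1+2*p-γ)! : ℚ) / (((2*p-2*γ)! : ℚ) * ((γ)! : ℚ))) := by
      intro γ hγ
      have h1 : 2*(p+1)-2*(γ+1) = 2*p-2*γ := by omega
      have h2 : s+2*(p+1)-(γ+1) = s+1+2*p-γ := by omega
      rw [h1, h2, Nat.factorial_succ]
      have hγ0 : ((γ)! : ℚ) ≠ 0 := by positivity
      have hc : ((γ:ℚ)+1) ≠ 0 := by positivity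
      push_cast
      rw [pow_succ]
      field_simp
    rw [Finset.sum_congr rfl hterm, Finset.sum_neg_distrib]
    push_cast
    ring
  rw [e3]
  unfold A
  ring

lemma keyId : ∀ p s : ℕ, A s p
    = (s ! : ℚ) * ((2*s+2*p+1)! : ℚ) / (((2*s+1)! : ℚ) * ((2*p)! : ℚ)) := by
  intro p
  induction p with
  | zero =>
    intro s
    unfold A
    rw [Finset.sum_range_one]
    have h0 : (((2*s+1)!:ℚ)) ≠ 0 := by positivity
    simp [Nat.factorial]
    field_simp
  | succ p ih =>
    intro s
    induction s with
    | zero =>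
      have hA : A 0 (p+1) = 2*((p:ℚ)+1)+1 := by
        unfold A
        have hc : ∀ β ∈ range (p+1+1),
            ((-1:ℚ)^β * 2^(2*(p+1)-2*β) * ((0+2*(p+1)-β)! : ℚ) / (((2*(p+1)-2*β)! : ℚ) * ((β)! : ℚ)))
            = ((-1:ℚ)^β * 2^(2*(p+1)-2*β) * ((2*(p+1)-β)! : ℚ) / (((2*(p+1)-2*β)! : ℚ) * ((β)! : ℚ))) := by
          intro β _
          have : 0+2*(p+1)-β = 2*(p+1)-β := by omega
          rw [this]
        rw [Finset.sum_congr rfl hc, A0 (p+1)]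
        push_cast; ring
      rw [hA]
      have e1 : 2*0+2*(p+1)+1 = (2*p+2)+1 := by ring
      have e2 : 2*(p+1) = 2*p+2 := by ring
      rw [e1, e2, Nat.factorial_succ]
      have h0 : (((2*p+2)!:ℚ)) ≠ 0 := by positivity
      push_cast
      field_simp
      ring
    | succ s ihs =>
      rw [keyRec s p, ihs, ih (s+1)]
      have e1 : 2*s+2*(p+1)+1 = 2*s+2*p+3 := by ring
      have e2 : 2*(p+1) = (2*p+1)+1 := by ring
      have e3 : 2*(s+1)+2*p+1 = 2*s+2*p+3 := by ring
      have e4 : 2*(s+1)+1 = (2*s+2)+1 := by ring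
      have e5 : 2*(s+1)+2*(p+1)+1 = (2*s+2*p+4)+1 := by ring
      rw [e1, e3, e4, e5, e2]
      rw [Nat.factorial_succ (2*p+1), Nat.factorial_succ (2*s+2), Nat.factorial_succ (2*s+2*p+4),
        Nat.factorial_succ s, Nat.factorial_succ (2*s+1), Nat.factorial_succ (2*p),
        Nat.factorial_succ (2*s+2*p+3), Nat.factorial_succ (2*s+2*p+2)]
      have h1 : ((s !:ℚ)) ≠ 0 := by positivity
      have h2 : (((2*s+1)!:ℚ)) ≠ 0 := by positivity
      have h3 : (((2*p)!:ℚ)) ≠ 0 := by positivity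
      have h4 : (((2*s+2*p+2)!:ℚ)) ≠ 0 := by positivity
      push_cast
      field_simp
      ring


theorem stmt_8 (r e p p' : ℕ) (hr : 1 ≤ r) (he : 1 ≤ e)
    (hp : 2 * p ≤ r * e) (hpp' : p ≤ p') (hp'e : p' - p ≤ e) (hsum : p' + p ≤ r * e) :
    ((-1 : ℚ) ^ (p' - p) * (Nat.factorial (2 * p) : ℚ) * (Nat.factorial (2 * p') : ℚ) *
        (Nat.factorial (r * e - 2 * p) : ℚ) * (Nat.factorial e : ℚ) /
      ((Nat.factorial (p' - p) : ℚ) * (Nat.factorial (e - (p' - p)) : ℚ) *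
        (Nat.factorial (r * e - p' - p) : ℚ) * (Nat.factorial ((r + 1) * e - 2 * p') : ℚ))) *
      (∑ β ∈ Finset.range (p + 1),
        ((-1 : ℚ) ^ β * 2 ^ (2 * p - 2 * β) *
          (Nat.factorial ((r + 1) * e - p' - p + 2 * p - β) : ℚ) /
          ((Nat.factorial (2 * p - 2 * β) : ℚ) * (Nat.factorial β : ℚ)))) ≠ 0 := by
  set s : ℕ := (r + 1) * e - p' - p with hs
  have hA : (∑ β ∈ Finset.range (p + 1),
        ((-1 : ℚ) ^ β * 2 ^ (2 * p - 2 * β) *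
          (Nat.factorial (s + 2 * p - β) : ℚ) /
          ((Nat.factorial (2 * p - 2 * β) : ℚ) * (Nat.factorial β : ℚ)))) = A s p := rfl
  rw [hA, keyId p s]
  apply mul_ne_zero
  · apply div_ne_zero
    · have h1 : ((-1:ℚ)^(p'-p)) ≠ 0 := pow_ne_zero _ (by norm_num)
      exact mul_ne_zero (mul_ne_zero (mul_ne_zero (mul_ne_zero h1 (by positivity))
        (by positivity)) (by positivity)) (by positivity)
    · positivity
  · positivity
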